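/- Let φ = (√5 − 1)/2. Then log((√5−1)/4) / log((√5−1)²/8) is irrational. -/

import Mathlib

noncomputable def phi : ℝ := (Real.sqrt 5 - 1) / 2

lemma sqrt5_sq : Real.sqrt 5 ^ 2 = 5 := Real.sq_sqrt (by norm_num)

lemma sqrt5_lt : Real.sqrt 5 < 3 := by
  nlinarith [sqrt5_sq, Real.sqrt_nonneg 5]

lemma sqrt5_gt : 2 < Real.sqrt 5 := by
  nlinarith [sqrt5_sq, Real.sqrt_nonneg 5]

lemma phi_pos : 0 < phi := by
  have := sqrt5_gt; unfold phi; linarith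

lemma phi_lt_one : phi < 1 := by
  have := sqrt5_lt; unfold phi; linarith

lemma phi_sq : phi ^ 2 = 1 - phi := by
  have h := sqrt5_sq
  unfold phi; nlinarith

lemma phi_irrational : Irrational phi := by
  have h5 : Irrational (Real.sqrt 5) := (Nat.prime_five).irrational_sqrt
  have : Irrational ((Real.sqrt 5 - (1:ℚ)) / (2:ℤ)) :=
    (h5.sub_ratCast 1).div_intCast (by norm_num)
  simpa [phi] using this

lemma phi_pow_fib (n : ℕ) :
    phi ^ (n + 1) = (-1:ℝ) ^ (n + 1) * (Nat.fib n) + (-1:ℝ) ^ n * (Nat.fib (n + 1)) * phi := by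
  induction n with
  | zero => simp
  | succ k ih =>
    have h : phi ^ (k + 2) = phi ^ (k + 1) * phi := by ring
    rw [h, ih, Nat.fib_add_two]
    have hsq := phi_sq
    push_cast
    linear_combination ((-1:ℝ) ^ k * (Nat.fib (k + 1) : ℝ)) * hsq

lemma phi_pow_irrational (n : ℕ) : Irrational (phi ^ (n + 1)) := by
  rw [phi_pow_fib]
  have hb : ((-1:ℤ) ^ n * (Nat.fib (n + 1)) : ℤ) ≠ 0 := by
    have := Nat.fib_pos.mpr (Nat.succ_pos n)
    positivity
  have h1 : Irrational ((((-1:ℤ) ^ n * (Nat.fib (n + 1)) : ℤ) : ℝ) * phi) :=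
    phi_irrational.intCast_mul hb
  have h2 : Irrational ((((-1:ℤ) ^ (n+1) * (Nat.fib n) : ℤ) : ℝ) +
      (((-1:ℤ) ^ n * (Nat.fib (n + 1)) : ℤ) : ℝ) * phi) := h1.intCast_add _
  convert h2 using 2 <;> push_cast <;> ring

lemma phi_zpow_irrational (m : ℤ) (hm : m ≠ 0) : Irrational (phi ^ m) := by
  rcases lt_or_gt_of_ne hm with h | h
  · obtain ⟨n, hn⟩ : ∃ n : ℕ, m = -((n : ℤ) + 1) := ⟨(-m).toNat - 1, by omega⟩
    have : phi ^ m = (phi ^ (n + 1))⁻¹ := by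
      rw [hn]
      rw [zpow_neg]
      norm_cast
    rw [this]
    exact (phi_pow_irrational n).inv
  · obtain ⟨n, hn⟩ : ∃ n : ℕ, m = (n : ℤ) + 1 := ⟨m.toNat - 1, by omega⟩
    have : phi ^ m = phi ^ (n + 1) := by rw [hn]; norm_cast
    rw [this]
    exact phi_pow_irrational n

theorem log_ratio_golden_irrational :
    Irrational (Real.log ((Real.sqrt 5 - 1) / 4) /
      Real.log ((Real.sqrt 5 - 1) ^ 2 / 8)) := by
  have hx : (Real.sqrt 5 - 1) / 4 = phi / 2 := by unfold phi; ring
  have hy : (Real.sqrt 5 - 1) ^ 2 / 8 = phi ^ 2 / 2 := by unfold phi; ring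
  rw [hx, hy]
  have hp := phi_pos
  have hl := phi_lt_one
  have hxpos : (0:ℝ) < phi / 2 := by linarith
  have hypos : (0:ℝ) < phi ^ 2 / 2 := by positivity
  have hxlt : phi / 2 < 1 := by linarith
  have hylt : phi ^ 2 / 2 < 1 := by nlinarith
  have hlogx : Real.log (phi / 2) < 0 := Real.log_neg hxpos hxlt
  have hlogy : Real.log (phi ^ 2 / 2) < 0 := Real.log_neg hypos hylt
  rintro ⟨r, hr⟩
  set p : ℤ := r.num with hpdef
  set q : ℤ := (r.den : ℤ) with hqdef
  have hq0 : 0 < q := Int.natCast_pos.mpr r.pos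
  have hr' : Real.log (phi / 2) = r * Real.log (phi ^ 2 / 2) := by
    rw [eq_div_iff hlogy.ne] at hr
    linarith [hr]
  have hcast : ((q : ℝ) * r) = (p : ℝ) := by
    have h := Rat.mul_den_eq_num r
    exact_mod_cast congrArg (Rat.cast : ℚ → ℝ) (by rw [mul_comm]; exact h)
  have hkey : (q : ℝ) * Real.log (phi / 2) = (p : ℝ) * Real.log (phi ^ 2 / 2) := by
    rw [hr', ← mul_assoc, hcast]
  have hpow : (phi / 2) ^ q = (phi ^ 2 / 2) ^ p := by
    have h1 : Real.log ((phi / 2) ^ q) = Real.log ((phi ^ 2 / 2) ^ p) := by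
      rw [Real.log_zpow, Real.log_zpow, hkey]
    calc (phi / 2) ^ q = Real.exp (Real.log ((phi / 2) ^ q)) :=
          (Real.exp_log (zpow_pos hxpos q)).symm
      _ = Real.exp (Real.log ((phi ^ 2 / 2) ^ p)) := by rw [h1]
      _ = (phi ^ 2 / 2) ^ p := Real.exp_log (zpow_pos hypos p)
  have hphi_ne : phi ≠ 0 := ne_of_gt hp
  have h2ne : (2:ℝ) ≠ 0 := by norm_num
  have e1 : (phi / 2 : ℝ) ^ q = phi ^ q / 2 ^ q := div_zpow phi 2 q
  have e2 : (phi ^ 2 / 2 : ℝ) ^ p = phi ^ (2 * p) / 2 ^ p := by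
    rw [div_zpow]
    congr 1
    rw [← zpow_natCast phi 2, ← zpow_mul]
    norm_num
  have h1 : phi ^ q / (2:ℝ) ^ q = phi ^ (2 * p) / (2:ℝ) ^ p := by
    rw [← e1, ← e2, hpow]
  have h2qne : ((2:ℝ) ^ q) ≠ 0 := (zpow_pos (by norm_num : (0:ℝ) < 2) q).ne'
  have h2pne : ((2:ℝ) ^ p) ≠ 0 := (zpow_pos (by norm_num : (0:ℝ) < 2) p).ne'
  have hphiqne : (phi ^ (2 * p)) ≠ 0 := zpow_ne_zero _ hphi_ne
  rw [div_eq_div_iff h2qne h2pne] at h1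
  have hmain : phi ^ (q - 2 * p) = (2:ℝ) ^ (q - p) := by
    rw [zpow_sub₀ hphi_ne, zpow_sub₀ h2ne, div_eq_div_iff hphiqne h2pne]
    linear_combination h1
  by_cases hm : q - 2 * p = 0
  · rw [hm, zpow_zero] at hmain
    have hqp : q - p = 0 := by
      have : (2:ℝ) ^ (q - p) = (2:ℝ) ^ (0:ℤ) := by rw [zpow_zero]; exact hmain.symm
      exact zpow_right_injective₀ (by norm_num) (by norm_num) this
    omega
  · have hirr := phi_zpow_irrational _ hm
    rw [hmain] at hirr
    exact hirr ⟨(2:ℚ) ^ (q - p), by push_cast; ring⟩
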